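/- Let V be a finite nonempty set of points in ℝ². Then there exists a point x ∈ ℝ² minimizing the maximum distance to V: setting d = max_{v∈V} dist(x,v), every point y ∈ ℝ² satisfies max_{v∈V} dist(y,v) ≥ d, and moreover x lies in the convex hull of the set W = {v ∈ V : dist(x,v) = d}. -/

import Mathlib

open Finset Metric RealInnerProductSpace


/-- For a finite nonempty point set `V` in the plane there is a point `x` minimizing
the maximum distance `d` to `V`, and `x` lies in the convex hull of the set of points
of `V` at distance exactly `d` from `x`. -/
theorem stmt_19 (V : Finset (EuclideanSpace ℝ (Fin 2))) (hV : V.Nonempty) :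
    ∃ (x : EuclideanSpace ℝ (Fin 2)) (d : ℝ),
      (∀ v ∈ V, dist x v ≤ d) ∧ (∃ v ∈ V, dist x v = d) ∧
      (∀ y : EuclideanSpace ℝ (Fin 2), ∃ v ∈ V, d ≤ dist y v) ∧
      x ∈ convexHull ℝ {v | v ∈ V ∧ dist x v = d} := by
  set f : EuclideanSpace ℝ (Fin 2) → ℝ := fun x => V.sup' hV (fun v => dist x v) with hf
  have hfc : Continuous f := Continuous.finset_sup'_apply hV
    (fun v _ => Continuous.dist continuous_id continuous_const)
  obtain ⟨v0, hv0⟩ := hV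
  have hR0 : 0 ≤ f v0 := by
    exact dist_nonneg.trans (Finset.le_sup' (fun v => dist v0 v) hv0)
  obtain ⟨x, hxB, hxmin⟩ := (isCompact_closedBall v0 (f v0)).exists_isMinOn
    ⟨v0, mem_closedBall_self hR0⟩ hfc.continuousOn
  set d := f x with hd
  -- global minimality
  have hglob : ∀ y, d ≤ f y := by
    intro y
    by_cases hy : y ∈ closedBall v0 (f v0)
    · exact hxmin hy
    · have h1 : f v0 < dist y v0 := by
        simpa [dist_comm] using lt_of_not_ge (fun h => hy (mem_closedBall.2 (by simpa [dist_comm] using h)))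
      have h2 : dist y v0 ≤ f y := Finset.le_sup' (fun v => dist y v) hv0
      have h3 : d ≤ f v0 := hxmin (mem_closedBall_self hR0)
      linarith
  have hdle : ∀ v ∈ V, dist x v ≤ d := fun v hv => Finset.le_sup' (fun v => dist x v) hv
  obtain ⟨w0, hw0V, hw0d⟩ := Finset.exists_mem_eq_sup' ⟨v0, hv0⟩ (fun v => dist x v)
  refine ⟨x, d, hdle, ⟨w0, hw0V, hw0d.symm⟩, ?_, ?_⟩
  · intro y
    obtain ⟨w, hwV, hwd⟩ := Finset.exists_mem_eq_sup' ⟨v0, hv0⟩ (fun v => dist y v)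
    exact ⟨w, hwV, by rw [← hwd] at *; exact (hglob y)⟩
  · by_contra hx
    set W : Set (EuclideanSpace ℝ (Fin 2)) := {v | v ∈ V ∧ dist x v = d} with hW
    have hWfin : W.Finite := V.finite_toSet.subset (fun v hv => hv.1)
    have hclosed : IsClosed (convexHull ℝ W) := (hWfin.isCompact_convexHull ℝ).isClosed
    obtain ⟨g, u, hgx, hgW⟩ := geometric_hahn_banach_point_closed (convex_convexHull ℝ W) hclosed hx
    set z := (InnerProductSpace.toDual ℝ (EuclideanSpace ℝ (Fin 2))).symm g with hz
    have hzapp : ∀ y, ⟪z, y⟫ = g y := fun y => InnerProductSpace.toDual_symm_apply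
    set c := u - g x with hc
    have hc0 : 0 < c := sub_pos.2 hgx
    have hgc : ∀ w ∈ W, c < g w - g x := by
      intro w hw
      have := hgW w (subset_convexHull ℝ W hw)
      simp only [hc]; linarith
    have hw0W : w0 ∈ W := ⟨hw0V, hw0d.symm⟩
    have hzne : z ≠ 0 := by
      intro h
      have h1 := hzapp x
      have h2 := hzapp w0
      rw [h, inner_zero_left] at h1 h2
      have := hgc w0 hw0W
      linarith
    have hzn : 0 < ‖z‖ := norm_pos_iff.2 hzne
    set δ : ℝ := V.inf' ⟨v0, hv0⟩ (fun v => if dist x v = d then 1 else d - dist x v) with hδ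
    have hδ0 : 0 < δ := by
      rw [hδ]; refine (Finset.lt_inf'_iff _).2 ?_
      intro v hv
      by_cases h : dist x v = d
      · simp [h]
      · have := hdle v hv
        have : dist x v < d := lt_of_le_of_ne this h
        simp [h]; linarith
    set t : ℝ := min (δ / (2 * ‖z‖)) (c / ‖z‖ ^ 2) with ht
    have ht0 : 0 < t := lt_min (by positivity) (by positivity)
    set y : EuclideanSpace ℝ (Fin 2) := x + t • z with hy
    have hyx : dist y x ≤ δ / 2 := by
      rw [hy, dist_eq_norm, add_sub_cancel_left, norm_smul, Real.norm_eq_abs, abs_of_pos ht0]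
      calc t * ‖z‖ ≤ (δ / (2 * ‖z‖)) * ‖z‖ := by
            apply mul_le_mul_of_nonneg_right (min_le_left _ _) hzn.le
        _ = δ / 2 := by field_simp
    have hkey : ∀ v ∈ V, dist y v < d := by
      intro v hv
      by_cases hvW : dist x v = d
      · -- farthest point: use the inner product estimate
        have hsq : dist y v ^ 2 < d ^ 2 := by
          have hyv : y - v = (x - v) + t • z := by rw [hy]; abel
          have hinner : ⟪x - v, t • z⟫ = t * (g x - g v) := by
            rw [real_inner_smul_right, real_inner_comm, inner_sub_right, hzapp, hzapp]
          have hgv : c < g v - g x := hgc v ⟨hv, hvW⟩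
          have htz : t * ‖z‖ ^ 2 ≤ c := by
            calc t * ‖z‖ ^ 2 ≤ (c / ‖z‖ ^ 2) * ‖z‖ ^ 2 := by
                  apply mul_le_mul_of_nonneg_right (min_le_right _ _) (by positivity)
              _ = c := by field_simp
          calc dist y v ^ 2 = ‖(x - v) + t • z‖ ^ 2 := by rw [dist_eq_norm, hyv]
            _ = ‖x - v‖ ^ 2 + 2 * ⟪x - v, t • z⟫ + ‖t • z‖ ^ 2 := norm_add_sq_real _ _
            _ = d ^ 2 + 2 * (t * (g x - g v)) + t ^ 2 * ‖z‖ ^ 2 := by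
                rw [hinner, ← dist_eq_norm, hvW, norm_smul, Real.norm_eq_abs,
                  abs_of_pos ht0, mul_pow]
            _ < d ^ 2 - 2 * (t * c) + t * c := by
                have h1 : t * (g x - g v) < -(t * c) := by nlinarith
                have h2 : t ^ 2 * ‖z‖ ^ 2 ≤ t * c := by nlinarith
                nlinarith
            _ < d ^ 2 := by nlinarith
        have hd0 : 0 ≤ d := by rw [← hvW]; exact dist_nonneg
        exact lt_of_pow_lt_pow_left₀ 2 hd0 hsq
      · -- non-farthest point: move a little, still within distance d
        have hvd : dist x v ≤ d - δ := by
          have h1 : δ ≤ d - dist x v := by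
            have := Finset.inf'_le (fun v => if dist x v = d then 1 else d - dist x v) hv
            rw [if_neg hvW] at this
            exact le_trans (le_of_eq hδ) this
          linarith
        calc dist y v ≤ dist y x + dist x v := dist_triangle y x v
          _ ≤ δ / 2 + (d - δ) := add_le_add hyx hvd
          _ < d := by linarith
    obtain ⟨w, hwV, hwd⟩ := Finset.exists_mem_eq_sup' ⟨v0, hv0⟩ (fun v => dist y v)
    have h1 : d ≤ V.sup' ⟨v0, hv0⟩ (fun v => dist y v) := hglob y
    rw [hwd] at h1
    exact absurd h1 (not_le.2 (hkey w hwV))
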